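/- If the vertex set of a finite directed hypergraph can be partitioned into a source set A and a sink set B so that every vertex of A has outgoing hyperedges but no incoming hyperedges, and every vertex of B has incoming hyperedges but no outgoing hyperedges, then every hyperedge has Ollivier Ricci curvature 0 (the hypergraph is Ricci flat). -/

import Mathlib

open scoped ENNReal BigOperators

/-- A finite directed hypergraph: a finite collection of directed hyperedges,
each consisting of a tail set and a head set of vertices. -/
structure DirectedHypergraph (V : Type) where
  edges : Finset (Finset V × Finset V)

namespace DirectedHypergraph

variable {V : Type} [Fintype V] [DecidableEq V] (H : DirectedHypergraph V)

/-- One directed step: some hyperedge has `u` in its tail and `v` in its head. -/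
def Step (u v : V) : Prop := ∃ e ∈ H.edges, u ∈ e.1 ∧ v ∈ e.2

/-- Existence of a directed path of a given number of hyperedge-steps. -/
def PathLen (H : DirectedHypergraph V) : ℕ → V → V → Prop
  | 0, u, v => u = v
  | n + 1, u, v => ∃ w, H.Step u w ∧ PathLen H n w v

/-- Directed shortest-path distance: the minimal number of hyperedges along a
directed path from `u` to `v` (`⊤` if there is none), valued in `ℝ≥0∞`. -/
noncomputable def dist (u v : V) : ℝ≥0∞ :=
  sInf {n : ℝ≥0∞ | ∃ m : ℕ, n = m ∧ H.PathLen m u v}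

/-- Number of incoming hyperedges to a vertex. -/
def dIn (x : V) : ℕ := (H.edges.filter fun e => x ∈ e.2).card

/-- Number of outgoing hyperedges from a vertex. -/
def dOut (x : V) : ℕ := (H.edges.filter fun e => x ∈ e.1).card

/-- The in-measure `μ_{A^in}` associated to a tail set `A`. -/
noncomputable def muIn (A : Finset V) (z : V) : ℝ≥0∞ :=
  ∑ x ∈ A,
    if z = x then (if H.dIn x = 0 then (A.card : ℝ≥0∞)⁻¹ else 0)
    else ∑ e ∈ H.edges.filter (fun e => z ∈ e.1 ∧ x ∈ e.2),
      ((A.card * H.dIn x * e.1.card : ℕ) : ℝ≥0∞)⁻¹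

/-- The out-measure `μ_{B^out}` associated to a head set `B`. -/
noncomputable def muOut (B : Finset V) (z : V) : ℝ≥0∞ :=
  ∑ y ∈ B,
    if z = y then (if H.dOut y = 0 then (B.card : ℝ≥0∞)⁻¹ else 0)
    else ∑ e ∈ H.edges.filter (fun e => y ∈ e.1 ∧ z ∈ e.2),
      ((B.card * H.dOut y * e.2.card : ℕ) : ℝ≥0∞)⁻¹

/-- A coupling of two (discrete) measures on `V`. -/
def IsCoupling (μ ν : V → ℝ≥0∞) (ε : V → V → ℝ≥0∞) : Prop :=
  (∀ u, ∑ v, ε u v = μ u) ∧ (∀ v, ∑ u, ε u v = ν v)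

/-- Transport cost of a plan with respect to the directed distance. -/
noncomputable def cost (ε : V → V → ℝ≥0∞) : ℝ≥0∞ :=
  ∑ u, ∑ v, H.dist u v * ε u v

/-- Wasserstein distance: infimum of transport cost over all couplings. -/
noncomputable def W (μ ν : V → ℝ≥0∞) : ℝ≥0∞ :=
  ⨅ ε : {ε : V → V → ℝ≥0∞ // IsCoupling μ ν ε}, H.cost ε.1

/-- Ollivier Ricci curvature of a directed hyperedge `e : A → B`. -/
noncomputable def kappa (e : Finset V × Finset V) : ℝ :=
  1 - (H.W (H.muIn e.1) (H.muOut e.2)).toReal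

/-- A directed path from `u` to `v`, recorded by its (nonempty) list of
successive vertices after `u`, ending at `v`. -/
def IsDipath (u v : V) (p : List V) : Prop :=
  p ≠ [] ∧ List.Chain H.Step u p ∧ p.getLast? = some v

/-- A directed hypertree: loopless, at most one directed path between any two
vertices, and no directed cycles. -/
def IsHypertree : Prop :=
  (∀ e ∈ H.edges, ∀ x, ¬(x ∈ e.1 ∧ x ∈ e.2)) ∧
  (∀ u v p q, H.IsDipath u v p → H.IsDipath u v q → p = q) ∧
  (∀ u p, ¬H.IsDipath u u p)

end DirectedHypergraph

open DirectedHypergraph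

variable {V : Type} [Fintype V] [DecidableEq V]


/-- If the vertex set splits into a source set `A` (outgoing but no incoming
hyperedges) and a sink set `B` (incoming but no outgoing hyperedges), then
every hyperedge has curvature 0. -/
theorem ricci_flat_of_source_sink
    (H : DirectedHypergraph V) (A B : Finset V)
    (hdisj : Disjoint A B) (hcover : A ∪ B = Finset.univ)
    (hsrc : ∀ x ∈ A, H.dOut x ≠ 0 ∧ H.dIn x = 0)
    (hsink : ∀ y ∈ B, H.dIn y ≠ 0 ∧ H.dOut y = 0)
    (hne : ∀ e ∈ H.edges, e.1.Nonempty ∧ e.2.Nonempty) :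
    ∀ e ∈ H.edges, H.kappa e = 0 := by
  intro e he
  obtain ⟨hne1, hne2⟩ := hne e he
  -- tail vertices lie in A, head vertices lie in B
  have he1A : ∀ x ∈ e.1, x ∈ A := by
    intro x hx
    have hxu : x ∈ A ∪ B := hcover ▸ Finset.mem_univ x
    rcases Finset.mem_union.mp hxu with h | h
    · exact h
    · exfalso
      have h0 : H.dOut x = 0 := (hsink x h).2
      have : e ∈ H.edges.filter (fun e' => x ∈ e'.1) :=
        Finset.mem_filter.mpr ⟨he, hx⟩
      rw [Finset.card_eq_zero.mp h0] at this
      exact absurd this (Finset.notMem_empty e)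
  have he2B : ∀ y ∈ e.2, y ∈ B := by
    intro y hy
    have hyu : y ∈ A ∪ B := hcover ▸ Finset.mem_univ y
    rcases Finset.mem_union.mp hyu with h | h
    · exfalso
      have h0 : H.dIn y = 0 := (hsrc y h).2
      have : e ∈ H.edges.filter (fun e' => y ∈ e'.2) :=
        Finset.mem_filter.mpr ⟨he, hy⟩
      rw [Finset.card_eq_zero.mp h0] at this
      exact absurd this (Finset.notMem_empty e)
    · exact h
  have hcard1 : (e.1.card : ℝ≥0∞) ≠ 0 := by
    exact_mod_cast Finset.card_ne_zero_of_mem hne1.choose_spec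
  have hcard2 : (e.2.card : ℝ≥0∞) ≠ 0 := by
    exact_mod_cast Finset.card_ne_zero_of_mem hne2.choose_spec
  have htop1 : (e.1.card : ℝ≥0∞) ≠ ⊤ := ENNReal.natCast_ne_top _
  have htop2 : (e.2.card : ℝ≥0∞) ≠ ⊤ := ENNReal.natCast_ne_top _
  -- muIn is uniform on e.1
  have hmuIn : ∀ z, H.muIn e.1 z = if z ∈ e.1 then (e.1.card : ℝ≥0∞)⁻¹ else 0 := by
    intro z
    unfold DirectedHypergraph.muIn
    rw [← Finset.sum_ite_eq e.1 z (fun _ => (e.1.card : ℝ≥0∞)⁻¹)]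
    apply Finset.sum_congr rfl
    intro x hx
    have hIn : H.dIn x = 0 := (hsrc x (he1A x hx)).2
    by_cases hzx : z = x
    · simp [hzx, hIn]
    · simp only [if_neg hzx]
      have hfe : H.edges.filter (fun e' => z ∈ e'.1 ∧ x ∈ e'.2) = ∅ := by
        rw [Finset.filter_eq_empty_iff]
        intro e' he' hc
        have : e' ∈ H.edges.filter (fun e'' => x ∈ e''.2) :=
          Finset.mem_filter.mpr ⟨he', hc.2⟩
        rw [Finset.card_eq_zero.mp hIn] at this
        exact absurd this (Finset.notMem_empty e')
      simp [hfe]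
  -- muOut is uniform on e.2
  have hmuOut : ∀ z, H.muOut e.2 z = if z ∈ e.2 then (e.2.card : ℝ≥0∞)⁻¹ else 0 := by
    intro z
    unfold DirectedHypergraph.muOut
    rw [← Finset.sum_ite_eq e.2 z (fun _ => (e.2.card : ℝ≥0∞)⁻¹)]
    apply Finset.sum_congr rfl
    intro y hy
    have hOut : H.dOut y = 0 := (hsink y (he2B y hy)).2
    by_cases hzy : z = y
    · simp [hzy, hOut]
    · simp only [if_neg hzy]
      have hfe : H.edges.filter (fun e' => y ∈ e'.1 ∧ z ∈ e'.2) = ∅ := by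
        rw [Finset.filter_eq_empty_iff]
        intro e' he' hc
        have : e' ∈ H.edges.filter (fun e'' => y ∈ e''.1) :=
          Finset.mem_filter.mpr ⟨he', hc.1⟩
        rw [Finset.card_eq_zero.mp hOut] at this
        exact absurd this (Finset.notMem_empty e')
      simp [hfe]
  -- distance from a tail vertex to a head vertex is exactly 1
  have hdist : ∀ u ∈ e.1, ∀ v ∈ e.2, H.dist u v = 1 := by
    intro u hu v hv
    have hneuv : u ≠ v := by
      intro h
      exact (Finset.disjoint_left.mp hdisj (he1A u hu)) (h ▸ he2B v hv)
    apply le_antisymm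
    · apply sInf_le
      exact ⟨1, by norm_num, ⟨v, ⟨e, he, hu, hv⟩, rfl⟩⟩
    · apply le_sInf
      rintro b ⟨m, rfl, hp⟩
      rcases m with _ | m
      · exact absurd hp hneuv
      · exact_mod_cast Nat.one_le_iff_ne_zero.mpr (Nat.succ_ne_zero m)
  -- total mass computations
  have hmassIn : ∑ u, H.muIn e.1 u = 1 := by
    simp only [hmuIn]
    rw [Finset.sum_ite_mem, Finset.univ_inter, Finset.sum_const, nsmul_eq_mul,
      ENNReal.mul_inv_cancel hcard1 htop1]
  have hmassOut : ∑ v, H.muOut e.2 v = 1 := by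
    simp only [hmuOut]
    rw [Finset.sum_ite_mem, Finset.univ_inter, Finset.sum_const, nsmul_eq_mul,
      ENNReal.mul_inv_cancel hcard2 htop2]
  -- the explicit product coupling
  set ε0 : V → V → ℝ≥0∞ := fun u v =>
    if u ∈ e.1 ∧ v ∈ e.2 then ((e.1.card : ℝ≥0∞) * (e.2.card : ℝ≥0∞))⁻¹ else 0 with hε0
  have hinv : ((e.1.card : ℝ≥0∞) * (e.2.card : ℝ≥0∞))⁻¹
      = (e.1.card : ℝ≥0∞)⁻¹ * (e.2.card : ℝ≥0∞)⁻¹ :=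
    ENNReal.mul_inv (Or.inl hcard1) (Or.inl htop1)
  have hcoup : IsCoupling (H.muIn e.1) (H.muOut e.2) ε0 := by
    constructor
    · intro u
      by_cases hu : u ∈ e.1
      · simp only [hε0, hu, true_and, hmuIn, if_pos hu]
        rw [Finset.sum_ite_mem, Finset.univ_inter, Finset.sum_const, nsmul_eq_mul, hinv,
          ← mul_assoc, mul_comm (e.2.card : ℝ≥0∞) _, mul_assoc,
          ENNReal.mul_inv_cancel hcard2 htop2, mul_one]
        simp
      · simp [hε0, hu, hmuIn]
    · intro v
      by_cases hv : v ∈ e.2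
      · simp only [hε0, hv, and_true, hmuOut, if_pos hv]
        rw [Finset.sum_ite_mem, Finset.univ_inter, Finset.sum_const, nsmul_eq_mul, hinv,
          ← mul_assoc, ENNReal.mul_inv_cancel hcard1 htop1, one_mul]
        simp
      · simp [hε0, hv, hmuOut]
  have hW : H.W (H.muIn e.1) (H.muOut e.2) = 1 := by
    apply le_antisymm
    · -- upper bound via the explicit coupling
      have : H.cost ε0 = 1 := by
        have hcost : H.cost ε0 = ∑ u, ∑ v, ε0 u v := by
          unfold DirectedHypergraph.cost
          apply Finset.sum_congr rfl; intro u _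
          apply Finset.sum_congr rfl; intro v _
          by_cases h : u ∈ e.1 ∧ v ∈ e.2
          · rw [hdist u h.1 v h.2, one_mul]
          · simp [hε0, h]
        rw [hcost]
        calc ∑ u, ∑ v, ε0 u v = ∑ u, H.muIn e.1 u :=
              Finset.sum_congr rfl (fun u _ => hcoup.1 u)
          _ = 1 := hmassIn
      calc H.W (H.muIn e.1) (H.muOut e.2) ≤ H.cost ε0 :=
            iInf_le _ (⟨ε0, hcoup⟩ : {ε : V → V → ℝ≥0∞ // IsCoupling (H.muIn e.1) (H.muOut e.2) ε})
        _ = 1 := this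
    · -- lower bound: every coupling costs at least 1
      apply le_iInf
      rintro ⟨ε, hε⟩
      have hzero : ∀ u v, ¬(u ∈ e.1 ∧ v ∈ e.2) → ε u v = 0 := by
        intro u v h
        by_cases hu : u ∈ e.1
        · have hv : v ∉ e.2 := fun hv => h ⟨hu, hv⟩
          have : ε u v ≤ ∑ u', ε u' v :=
            Finset.single_le_sum (f := fun u' => ε u' v) (fun _ _ => zero_le) (Finset.mem_univ u)
          rw [hε.2 v, hmuOut, if_neg hv] at this
          exact le_antisymm this (zero_le)
        · have : ε u v ≤ ∑ v', ε u v' :=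
            Finset.single_le_sum (fun _ _ => zero_le) (Finset.mem_univ v)
          rw [hε.1 u, hmuIn, if_neg hu] at this
          exact le_antisymm this (zero_le)
      have : (1 : ℝ≥0∞) = ∑ u, ∑ v, ε u v := by
        rw [show ∑ u, ∑ v, ε u v = ∑ u, H.muIn e.1 u from
          Finset.sum_congr rfl (fun u _ => hε.1 u), hmassIn]
      rw [this]
      unfold DirectedHypergraph.cost
      apply Finset.sum_le_sum; intro u _
      apply Finset.sum_le_sum; intro v _
      by_cases h : u ∈ e.1 ∧ v ∈ e.2
      · rw [hdist u h.1 v h.2, one_mul]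
      · rw [hzero u v h]; exact zero_le
  simp [DirectedHypergraph.kappa, hW]
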